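/- Let {aₙ} be a sequence in ℂ, w ∈ ℂ, and let R ∈ (0,∞] be defined by limsup ‖aₙ‖^{1/n} = 1/R. Then the spherical series Σₙ S_{w,n}(z) aₙ converges absolutely and uniformly on compact subsets of the Cassini ball U(w,R) = {z ∈ ℂ : |Δ_w(z)| < R²}, and diverges at every z with |Δ_w(z)| > R². -/

import Mathlib

/-- The characteristic polynomial `Δ_w(z) = (z-w)(z-conj w)`. -/
noncomputable def Delta (w z : ℂ) : ℂ := (z - w) * (z - (starRingEnd ℂ) w)

/-- The complex spherical polynomials: `S_{w,2m}(z) = Δ_w(z)^m`,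
`S_{w,2m+1}(z) = Δ_w(z)^m (z−w)`. -/
noncomputable def Sph (w : ℂ) (n : ℕ) (z : ℂ) : ℂ :=
  Delta w z ^ (n / 2) * (if n % 2 = 1 then z - w else 1)

open Filter Finset

private lemma enn_pow_lt_of_rpow_lt {x y : ENNReal} {n : ℕ} (hn : n ≠ 0)
    (h : x ^ ((n : ℝ)⁻¹) < y) : x < y ^ n := by
  have h2 := ENNReal.pow_lt_pow_left hn h
  have hx : (x ^ ((n : ℝ)⁻¹)) ^ n = x := by
    rw [← ENNReal.rpow_natCast (x ^ ((n:ℝ)⁻¹)) n, ← ENNReal.rpow_mul,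
      inv_mul_cancel₀ (by exact_mod_cast hn : (n:ℝ) ≠ 0), ENNReal.rpow_one]
  rwa [hx] at h2

private lemma enn_lt_pow_of_lt_rpow {x y : ENNReal} {n : ℕ} (hn : n ≠ 0)
    (h : y < x ^ ((n : ℝ)⁻¹)) : y ^ n < x := by
  have h2 := ENNReal.pow_lt_pow_left hn h
  have hx : (x ^ ((n : ℝ)⁻¹)) ^ n = x := by
    rw [← ENNReal.rpow_natCast (x ^ ((n:ℝ)⁻¹)) n, ← ENNReal.rpow_mul,
      inv_mul_cancel₀ (by exact_mod_cast hn : (n:ℝ) ≠ 0), ENNReal.rpow_one]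
  rwa [hx] at h2

private lemma summable_aux {t C : ℝ} (ht : 0 ≤ t) (hC : 0 < C) (h : t < C ^ 2) :
    Summable fun n : ℕ => t ^ (n / 2) * C⁻¹ ^ n := by
  have hq0 : 0 ≤ t / C ^ 2 := by positivity
  have hq1 : t / C ^ 2 < 1 := (div_lt_one (by positivity)).2 h
  have hgeo := summable_geometric_of_lt_one hq0 hq1
  apply Summable.even_add_odd
  · refine hgeo.congr fun k => ?_
    have h1 : 2 * k / 2 = k := by omega
    rw [h1, inv_pow, pow_mul, div_pow, div_eq_mul_inv]
  · refine (hgeo.mul_right C⁻¹).congr fun k => ?_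
    have h1 : (2 * k + 1) / 2 = k := by omega
    rw [h1, div_pow, div_eq_mul_inv, ← pow_mul, pow_succ, inv_pow]
    ring

private lemma norm_Sph (w z : ℂ) (n : ℕ) :
    ‖Sph w n z‖ = ‖Delta w z‖ ^ (n / 2) *
      (if n % 2 = 1 then ‖z - w‖ else 1) := by
  unfold Sph
  rw [norm_mul, norm_pow]
  split_ifs <;> simp

private lemma aux2 {d C : ℝ} (hC : 0 < C) (h : C ^ 2 ≤ d) (n : ℕ) :
    min 1 C⁻¹ ≤ d ^ (n / 2) * C⁻¹ ^ n := by
  have hd0 : 0 ≤ d := le_trans (by positivity) h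
  have hpos : 0 < C⁻¹ ^ n := by positivity
  rcases Nat.even_or_odd n with ⟨m, hm⟩ | ⟨m, hm⟩
  · subst hm
    have h1 : (m + m) / 2 = m := by omega
    rw [h1]
    have h2 : (C ^ 2) ^ m * C⁻¹ ^ (m + m) = 1 := by
      rw [inv_pow, ← pow_mul]
      have : 2 * m = m + m := by ring
      rw [this, mul_inv_cancel₀ (by positivity)]
    calc min 1 C⁻¹ ≤ 1 := min_le_left _ _
      _ = (C ^ 2) ^ m * C⁻¹ ^ (m + m) := h2.symm
      _ ≤ d ^ m * C⁻¹ ^ (m + m) := by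
          apply mul_le_mul_of_nonneg_right _ (by positivity)
          exact pow_le_pow_left₀ (by positivity) h _
  · subst hm
    have h1 : (2 * m + 1) / 2 = m := by omega
    rw [h1]
    have h2 : (C ^ 2) ^ m * C⁻¹ ^ (2 * m + 1) = C⁻¹ := by
      rw [inv_pow, ← pow_mul, pow_succ, mul_inv, ← mul_assoc, mul_inv_cancel₀ (by positivity), one_mul]
    calc min 1 C⁻¹ ≤ C⁻¹ := min_le_right _ _
      _ = (C ^ 2) ^ m * C⁻¹ ^ (2 * m + 1) := h2.symm
      _ ≤ d ^ m * C⁻¹ ^ (2 * m + 1) := by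
          apply mul_le_mul_of_nonneg_right _ (by positivity)
          exact pow_le_pow_left₀ (by positivity) h _


/-- Abel theorem for spherical series: if `limsup ‖aₙ‖^{1/n} = 1/R` with
`R ∈ (0,∞]`, then `Σₙ S_{w,n}(z)·aₙ` converges absolutely and uniformly on
compact subsets of the Cassini ball `{z : |Δ_w(z)| < R²}` and diverges at
every `z` with `|Δ_w(z)| > R²`. -/
theorem abel_spherical (w : ℂ) (a : ℕ → ℂ) (R : ENNReal) (hR : 0 < R)
    (hls : limsup (fun n : ℕ => (‖a n‖₊ : ENNReal) ^ ((n : ℝ)⁻¹)) atTop = R⁻¹) :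
    (∀ K : Set ℂ, IsCompact K →
      (∀ z ∈ K, ENNReal.ofReal (‖Delta w z‖) < R ^ 2) →
      (∀ z ∈ K, Summable fun n => ‖Sph w n z * a n‖) ∧
      ∃ g : ℂ → ℂ, TendstoUniformlyOn
        (fun N z => ∑ n ∈ range N, Sph w n z * a n) g atTop K) ∧
    (∀ z : ℂ, R ^ 2 < ENNReal.ofReal (‖Delta w z‖) →
      ¬ ∃ l : ℂ, Tendsto (fun N => ∑ n ∈ range N, Sph w n z * a n) atTop (nhds l)) := by
  constructor
  · -- convergence part
    intro K hK hKlt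
    rcases K.eq_empty_or_nonempty with rfl | hne
    · refine ⟨by simp, 0, ?_⟩
      intro u hu
      filter_upwards with n
      intro x hx
      exact absurd hx (Set.notMem_empty x)
    have hcont : Continuous fun z => ‖Delta w z‖ := by
      apply continuous_norm.comp
      unfold Delta
      continuity
    obtain ⟨z₀, hz₀K, hz₀⟩ := hK.exists_isMaxOn hne hcont.continuousOn
    set t : ℝ := ‖Delta w z₀‖ with ht
    have ht0 : 0 ≤ t := norm_nonneg _
    have htR : ENNReal.ofReal t < R ^ 2 := hKlt z₀ hz₀K
    obtain ⟨r, hr1, hr2⟩ := ENNReal.lt_iff_exists_nnreal_btwn.mp htR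
    have hr0 : 0 < r := ENNReal.coe_pos.mp (lt_of_le_of_lt zero_le hr1)
    set c : NNReal := NNReal.sqrt r with hc
    have hc2 : c ^ 2 = r := NNReal.sq_sqrt r
    have hc0 : 0 < c := NNReal.sqrt_pos.mpr hr0
    have hcR : (c : ENNReal) < R := by
      by_contra hcon
      push_neg at hcon
      have h3 : R ^ 2 ≤ (c : ENNReal) ^ 2 := pow_le_pow_left₀ zero_le hcon 2
      rw [← ENNReal.coe_pow, hc2] at h3
      exact absurd hr2 (not_lt.mpr h3)
    have hev : ∀ᶠ n in atTop, (‖a n‖₊ : ENNReal) ^ ((n : ℝ)⁻¹) < (c : ENNReal)⁻¹ :=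
      eventually_lt_of_limsup_lt (by rw [hls]; exact ENNReal.inv_lt_inv.mpr hcR)
    set C : ℝ := (c : ℝ) with hCdef
    have hC0 : (0 : ℝ) < C := hc0
    have hev2 : ∀ᶠ n in atTop, ‖a n‖ ≤ C⁻¹ ^ n := by
      filter_upwards [hev, eventually_ge_atTop 1] with n hn hn1
      have hne' : n ≠ 0 := by omega
      rw [← ENNReal.coe_inv hc0.ne'] at hn
      have h4 := enn_pow_lt_of_rpow_lt hne' hn
      rw [← ENNReal.coe_pow, ENNReal.coe_lt_coe] at h4
      have h5 : (‖a n‖₊ : ℝ) ≤ ((c⁻¹ ^ n : NNReal) : ℝ) := NNReal.coe_le_coe.mpr h4.le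
      rw [coe_nnnorm] at h5
      refine h5.trans (le_of_eq ?_)
      push_cast
      rfl
    obtain ⟨N₀, hN₀⟩ := eventually_atTop.mp hev2
    set D : ℝ := 1 + ∑ k ∈ range N₀, ‖a k‖ * C ^ k with hDdef
    have hD1 : (1 : ℝ) ≤ D := le_add_of_nonneg_right (sum_nonneg fun k _ => by positivity)
    have hDa : ∀ n, ‖a n‖ ≤ D * C⁻¹ ^ n := by
      intro n
      rcases lt_or_ge n N₀ with h | h
      · have hsum : ‖a n‖ * C ^ n ≤ D := by
          have h6 : ‖a n‖ * C ^ n ≤ ∑ k ∈ range N₀, ‖a k‖ * C ^ k :=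
            Finset.single_le_sum (f := fun k => ‖a k‖ * C ^ k) (fun k _ => by positivity) (mem_range.mpr h)
          linarith
        have h7 : ‖a n‖ = (‖a n‖ * C ^ n) * C⁻¹ ^ n := by
          rw [mul_assoc, ← mul_pow, mul_inv_cancel₀ hC0.ne', one_pow, mul_one]
        rw [h7]
        exact mul_le_mul_of_nonneg_right hsum (by positivity)
      · calc ‖a n‖ ≤ C⁻¹ ^ n := hN₀ n h
          _ ≤ D * C⁻¹ ^ n := le_mul_of_one_le_left (by positivity) hD1
    obtain ⟨z₁, hz₁K, hz₁⟩ := hK.exists_isMaxOn hne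
      ((continuous_norm.comp (continuous_id.sub continuous_const)).continuousOn)
    set B : ℝ := max 1 (‖z₁ - w‖) with hBdef
    have hBe : ∀ z ∈ K, ∀ n : ℕ, (if n % 2 = 1 then ‖z - w‖ else 1) ≤ B := by
      intro z hz n
      split_ifs
      · exact le_max_of_le_right (hz₁ hz)
      · exact le_max_left _ _
    have htc : t < C ^ 2 := by
      rw [← ENNReal.ofReal_coe_nnreal] at hr1
      have h8 : t < (r : ℝ) := (ENNReal.ofReal_lt_ofReal_iff (by exact_mod_cast hr0)).mp hr1
      have h9 : (r : ℝ) = C ^ 2 := by rw [← hc2]; push_cast; ring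
      linarith
    set M : ℕ → ℝ := fun n => (B * D) * (t ^ (n / 2) * C⁻¹ ^ n) with hM
    have hMsum : Summable M := (summable_aux ht0 hC0 htc).mul_left _
    have hbound : ∀ (n : ℕ), ∀ z ∈ K, ‖Sph w n z * a n‖ ≤ M n := by
      intro n z hz
      rw [norm_mul, norm_Sph]
      have h1 : ‖Delta w z‖ ^ (n / 2) ≤ t ^ (n / 2) :=
        pow_le_pow_left₀ (norm_nonneg _) (hz₀ hz) _
      have h2 := hBe z hz n
      have h4 : (0 : ℝ) ≤ if n % 2 = 1 then ‖z - w‖ else 1 := by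
        split_ifs
        · exact norm_nonneg _
        · exact zero_le_one
      calc ‖Delta w z‖ ^ (n / 2) * (if n % 2 = 1 then ‖z - w‖ else 1)
            * ‖a n‖
          ≤ (t ^ (n / 2) * B) * (D * C⁻¹ ^ n) := by
            apply mul_le_mul (mul_le_mul h1 h2 h4 (by positivity)) (hDa n) (norm_nonneg _)
              (by positivity)
        _ = M n := by rw [hM]; ring
    refine ⟨fun z hz => ?_, _, tendstoUniformlyOn_tsum_nat hMsum fun n z hz => hbound n z hz⟩
    exact Summable.of_nonneg_of_le (fun n => norm_nonneg _) (fun n => hbound n z hz) hMsum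
  · -- divergence part
    rintro z hz ⟨l, hl⟩
    have hR2 : (0 : ENNReal) < R ^ 2 := ENNReal.pow_pos hR 2
    have hd0 : 0 < ‖Delta w z‖ := ENNReal.ofReal_pos.mp (lt_trans hR2 hz)
    have hzw : 0 < ‖z - w‖ := by
      have h1 : 0 < ‖z - w‖ * ‖z - (starRingEnd ℂ) w‖ := by
        rw [← norm_mul]; exact hd0
      nlinarith [norm_nonneg (z - w),
        norm_nonneg (z - (starRingEnd ℂ) w)]
    obtain ⟨r, hr1, hr2⟩ := ENNReal.lt_iff_exists_nnreal_btwn.mp hz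
    have hr0 : 0 < r := ENNReal.coe_pos.mp (lt_trans hR2 hr1)
    set c : NNReal := NNReal.sqrt r with hc
    have hc2 : c ^ 2 = r := NNReal.sq_sqrt r
    have hc0 : 0 < c := NNReal.sqrt_pos.mpr hr0
    have hRc : R < (c : ENNReal) := by
      by_contra hcon
      push_neg at hcon
      have h3 : (c : ENNReal) ^ 2 ≤ R ^ 2 := pow_le_pow_left₀ zero_le hcon 2
      rw [← ENNReal.coe_pow, hc2] at h3
      exact absurd hr1 (not_lt.mpr h3)
    have hlim : (c : ENNReal)⁻¹ <
        limsup (fun n : ℕ => (‖a n‖₊ : ENNReal) ^ ((n : ℝ)⁻¹)) atTop := by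
      rw [hls]; exact ENNReal.inv_lt_inv.mpr hRc
    have hfreq := frequently_lt_of_lt_limsup (by isBoundedDefault) hlim
    set C : ℝ := (c : ℝ) with hCdef
    have hC0 : (0 : ℝ) < C := hc0
    have hd2 : C ^ 2 ≤ ‖Delta w z‖ := by
      rw [← ENNReal.ofReal_coe_nnreal] at hr2
      have h8 : (r : ℝ) < ‖Delta w z‖ := (ENNReal.ofReal_lt_ofReal_iff hd0).mp hr2
      have h9 : (r : ℝ) = C ^ 2 := by rw [← hc2]; push_cast; ring
      linarith
    set ε : ℝ := min 1 (‖z - w‖) * min 1 C⁻¹ with hεdef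
    have hεpos : 0 < ε := mul_pos (lt_min one_pos hzw) (lt_min one_pos (by positivity))
    have hterm : Tendsto (fun n => Sph w n z * a n) atTop (nhds 0) := by
      have h1 := (hl.comp (tendsto_add_atTop_nat 1)).sub hl
      rw [sub_self] at h1
      have h2 : (fun N => (∑ n ∈ range (N + 1), Sph w n z * a n)
          - ∑ n ∈ range N, Sph w n z * a n) = fun N => Sph w N z * a N := by
        funext N
        rw [sum_range_succ]
        ring
      simp only [Function.comp_def] at h1
      rwa [h2] at h1
    have hsmall : ∀ᶠ n in atTop, ‖Sph w n z * a n‖ < ε :=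
      (NormedAddCommGroup.tendsto_nhds_zero.mp hterm) ε hεpos
    have hbig : ∃ᶠ n in atTop, ε ≤ ‖Sph w n z * a n‖ := by
      refine (hfreq.and_eventually (eventually_ge_atTop 1)).mono ?_
      rintro n ⟨hn, hn1⟩
      have hne' : n ≠ 0 := by omega
      rw [← ENNReal.coe_inv hc0.ne'] at hn
      have h4 := enn_lt_pow_of_lt_rpow hne' hn
      rw [← ENNReal.coe_pow, ENNReal.coe_lt_coe] at h4
      have ha : C⁻¹ ^ n ≤ ‖a n‖ := by
        have h5 : ((c⁻¹ ^ n : NNReal) : ℝ) ≤ (‖a n‖₊ : ℝ) := NNReal.coe_le_coe.mpr h4.le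
        rw [coe_nnnorm] at h5
        refine le_trans (le_of_eq ?_) h5
        push_cast
        rfl
      rw [norm_mul, norm_Sph]
      have f1 : min 1 (‖z - w‖) ≤
          (if n % 2 = 1 then ‖z - w‖ else 1) := by
        split_ifs
        · exact min_le_right _ _
        · exact min_le_left _ _
      have f2 : min 1 C⁻¹ ≤ ‖Delta w z‖ ^ (n / 2) * C⁻¹ ^ n := aux2 hC0 hd2 n
      have f4 : (0 : ℝ) ≤ if n % 2 = 1 then ‖z - w‖ else 1 := by
        split_ifs
        · exact norm_nonneg _
        · exact zero_le_one
      calc ε ≤ (if n % 2 = 1 then ‖z - w‖ else 1)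
            * (‖Delta w z‖ ^ (n / 2) * C⁻¹ ^ n) :=
          mul_le_mul f1 f2 (le_min zero_le_one (by positivity)) f4
        _ ≤ (if n % 2 = 1 then ‖z - w‖ else 1)
            * (‖Delta w z‖ ^ (n / 2) * ‖a n‖) := by
            apply mul_le_mul_of_nonneg_left _ f4
            exact mul_le_mul_of_nonneg_left ha (by positivity)
        _ = ‖Delta w z‖ ^ (n / 2)
            * (if n % 2 = 1 then ‖z - w‖ else 1) * ‖a n‖ := by ring
    obtain ⟨n, h1n, h2n⟩ := (hbig.and_eventually hsmall).exists
    linarith
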